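/- arXiv:2101.00725 — 2 statements merged into one kernel-verified Lean document; each statement's English description precedes it below -/
import Mathlib

section
/- Let $d\in\mathbb N$, let $K_i=[x_i-h/2,x_i+h/2]$ be a cell of a uniform mesh of size $h>0$, let $S_i$ be a stencil consisting of $n_i>d$ cells of the mesh distinct from $K_i$ (all cells having pairwise disjoint interiors), and let $(\phi_j)_{j\in S_i}$ be given real data. For $R=(R_1,\dots,R_d)\in\mathbb R^d$ define $p_R(x)=\phi_i+\sum_{k=1}^d R_k((x-x_i)^k-X_{i,k})$ with $X_{i,k}=\frac1h\int_{K_i}(x-x_i)^k dx$, and the quadratic functional $E_i(R)=\sum_{j\in S_i}\big(\frac1h\int_{K_j}p_R(x)\,dx-\phi_j\big)^2$. Then $E_i$ admits a unique minimizer $\widehat R\in\mathbb R^d$. -/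
open Polynomial RealInnerProductSpace

private lemma int_pow_sub (a b ci : ℝ) (m : ℕ) :
    ∫ x in a..b, (x - ci)^m = ((b-ci)^(m+1) - (a-ci)^(m+1))/(m+1) := by
  rw [intervalIntegral.integral_comp_sub_right (fun x => x^m) ci, integral_pow]

/-- Existence and uniqueness of the minimizer of the least-squares
reconstruction functional on a uniform 1D mesh.  The mesh cells are
`K_j = [c j - h/2, c j + h/2]` with centers `c j = c 0 + j h` (hence with
pairwise disjoint interiors); the stencil `S` consists of `n_i > d` cells
distinct from the reference cell `K_i`. -/
theorem least_squares_unique_minimizer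
    (d : ℕ) (h : ℝ) (hh : 0 < h) (c : ℤ → ℝ) (hc : ∀ j : ℤ, c j = c 0 + j * h)
    (i : ℤ) (S : Finset ℤ) (hiS : i ∉ S) (hcard : d < S.card)
    (φi : ℝ) (φ : ℤ → ℝ) (X : ℕ → ℝ)
    (hX : ∀ k, X k = (1/h) * ∫ x in (c i - h/2)..(c i + h/2), (x - c i)^k)
    (p : (Fin d → ℝ) → ℝ → ℝ)
    (hp : ∀ R x, p R x = φi + ∑ k : Fin d, R k * ((x - c i)^(k.1+1) - X (k.1+1)))
    (E : (Fin d → ℝ) → ℝ)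
    (hE : ∀ R, E R = ∑ j ∈ S, ((1/h) * (∫ x in (c j - h/2)..(c j + h/2), p R x) - φ j)^2) :
    ∃! R : Fin d → ℝ, ∀ R' : Fin d → ℝ, E R ≤ E R' := by
  classical
  have hh' : h ≠ 0 := ne_of_gt hh
  set ci := c i with hci
  -- the averaged monomials
  set A : ℤ → ℕ → ℝ := fun j k =>
    ((c j + h/2 - ci)^(k+2) - (c j - h/2 - ci)^(k+2))/((k+2)*h) - X (k+1) with hA
  -- computation of the cell averages of p R
  have havg : ∀ (R : Fin d → ℝ) (j : ℤ),
      (1/h) * (∫ x in (c j - h/2)..(c j + h/2), p R x)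
        = φi + ∑ k : Fin d, R k * A j k.1 := by
    intro R j
    have hint : ∀ k : Fin d, IntervalIntegrable
        (fun x => R k * ((x - ci)^(k.1+1) - X (k.1+1)))
        MeasureTheory.volume (c j - h/2) (c j + h/2) := by
      intro k
      apply Continuous.intervalIntegrable
      fun_prop
    have hgint : IntervalIntegrable
        (fun x => ∑ k : Fin d, R k * ((x - ci)^(k.1+1) - X (k.1+1)))
        MeasureTheory.volume (c j - h/2) (c j + h/2) := by
      apply Continuous.intervalIntegrable
      fun_prop
    have hsplit : (∫ x in (c j - h/2)..(c j + h/2), p R x)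
        = (∫ x in (c j - h/2)..(c j + h/2), φi)
          + ∑ k : Fin d, ∫ x in (c j - h/2)..(c j + h/2),
              R k * ((x - ci)^(k.1+1) - X (k.1+1)) := by
      rw [← intervalIntegral.integral_finset_sum (fun k (_ : k ∈ Finset.univ) => hint k),
        ← intervalIntegral.integral_add intervalIntegrable_const
          hgint]
      apply intervalIntegral.integral_congr
      intro x _
      simp [hp]
    rw [hsplit]
    have hterm : ∀ k : Fin d,
        (∫ x in (c j - h/2)..(c j + h/2), R k * ((x - ci)^(k.1+1) - X (k.1+1)))
          = R k * (((c j + h/2 - ci)^(k.1+2) - (c j - h/2 - ci)^(k.1+2))/(k.1+2)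
              - h * X (k.1+1)) := by
      intro k
      rw [intervalIntegral.integral_const_mul,
        intervalIntegral.integral_sub (by apply Continuous.intervalIntegrable; fun_prop)
          intervalIntegrable_const,
        int_pow_sub, intervalIntegral.integral_const, smul_eq_mul]
      have h1 : c j + h/2 - (c j - h/2) = h := by ring
      have hkk : k.1+1+1 = k.1+2 := by omega
      rw [h1, hkk]
      push_cast
      ring_nf
    rw [Finset.sum_congr rfl (fun k _ => hterm k)]
    rw [intervalIntegral.integral_const, smul_eq_mul]
    have : c j + h/2 - (c j - h/2) = h := by ring
    rw [this, mul_add, Finset.mul_sum]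
    congr 1
    · field_simp
    · apply Finset.sum_congr rfl
      intro k _
      simp only [hA]
      have hk2 : ((k.1:ℝ)+2) ≠ 0 := by positivity
      field_simp
  -- injectivity of the coefficient map
  have hcinj : Function.Injective c := by
    intro a b hab
    rw [hc a, hc b] at hab
    have : (a:ℝ) * h = (b:ℝ) * h := by linarith
    have : (a:ℝ) = b := mul_right_cancel₀ hh' this
    exact_mod_cast this
  have hLinj : ∀ R : Fin d → ℝ,
      (∀ j ∈ S, ∑ k : Fin d, R k * A j k.1 = 0) → R = 0 := by
    intro R hR
    set a : ℝ := h/2 - ci with ha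
    set b : ℝ := -(h/2) - ci with hb
    set Q : ℝ[X] := ∑ k : Fin d,
      C (R k / (k.1+2)) * ((Polynomial.X + C a)^(k.1+2) - (Polynomial.X + C b)^(k.1+2)
        - C ((k.1+2) * h * X (k.1+1))) with hQ
    have hcoeff : ∀ (k : Fin d) (r : ℕ), 1 ≤ r →
        (C (R k / (k.1+2)) * ((Polynomial.X + C a)^(k.1+2) - (Polynomial.X + C b)^(k.1+2)
          - C ((k.1+2) * h * X (k.1+1)))).coeff r
        = R k / (k.1+2) * ((a^(k.1+2-r) - b^(k.1+2-r)) * ((k.1+2).choose r)) := by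
      intro k r hr
      rw [coeff_C_mul, coeff_sub, coeff_sub, coeff_X_add_C_pow, coeff_X_add_C_pow,
        coeff_C, if_neg (by omega)]
      ring
    have hQeval : ∀ j ∈ S, Q.eval (c j) = 0 := by
      intro j hj
      have h0 := hR j hj
      simp only [hQ, eval_finset_sum, eval_mul, eval_C, eval_sub, eval_pow, eval_add, eval_X]
      have hterm : ∀ k : Fin d,
          R k / (k.1+2) * ((c j + a)^(k.1+2) - (c j + b)^(k.1+2) - (k.1+2)*h*X (k.1+1))
            = h * (R k * A j k.1) := by
        intro k
        simp only [hA, ha, hb]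
        have hk2 : ((k.1:ℝ)+2) ≠ 0 := by positivity
        have e1 : c j + (h/2 - ci) = c j + h/2 - ci := by ring
        have e2 : c j + (-(h/2) - ci) = c j - h/2 - ci := by ring
        rw [e1, e2]
        field_simp
      rw [Finset.sum_congr rfl (fun k _ => hterm k), ← Finset.mul_sum, h0, mul_zero]
    have hdeg : Q.natDegree ≤ d := by
      rw [natDegree_le_iff_coeff_eq_zero]
      intro r hr
      rw [hQ, finset_sum_coeff]
      apply Finset.sum_eq_zero
      intro k _
      rw [hcoeff k r (by omega)]
      rcases eq_or_lt_of_le (show k.1+2 ≤ r by have := k.isLt; omega) with hkr | hkr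
      · rw [← hkr]
        simp
      · rw [Nat.choose_eq_zero_of_lt hkr]
        simp
    have hQ0 : Q = 0 := by
      apply Polynomial.eq_zero_of_natDegree_lt_card_of_eval_eq_zero' Q (S.image c)
      · intro x hx
        obtain ⟨j, hj, rfl⟩ := Finset.mem_image.mp hx
        exact hQeval j hj
      · rw [Finset.card_image_of_injective S hcinj]
        exact lt_of_le_of_lt hdeg hcard
    have step : ∀ k : Fin d, (∀ k' : Fin d, k.1 < k'.1 → R k' = 0) → R k = 0 := by
      intro k hk'
      have hcQ : Q.coeff (k.1+1) = R k * h := by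
        rw [hQ, finset_sum_coeff]
        rw [Finset.sum_eq_single k]
        · rw [hcoeff k (k.1+1) (by omega)]
          have h1 : k.1+2 - (k.1+1) = 1 := by omega
          have h2 : (k.1+2).choose (k.1+1) = k.1+2 := by
            have := Nat.choose_succ_self_right (k.1+1)
            simpa using this
          rw [h1, h2]
          have hk2 : ((k.1:ℝ)+2) ≠ 0 := by positivity
          have hab : a - b = h := by rw [ha, hb]; ring
          simp only [pow_one]
          rw [hab]
          push_cast
          field_simp
        · intro k' _ hne
          rw [hcoeff k' (k.1+1) (by omega)]
          rcases lt_or_gt_of_ne (fun hval => hne (Fin.ext hval) : k'.1 ≠ k.1) with hlt | hgt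
          · -- k'.1 < k.1 : degree reasons
            rcases eq_or_lt_of_le (show k'.1+2 ≤ k.1+1 by omega) with hkr | hkr
            · rw [← hkr]
              simp
            · rw [Nat.choose_eq_zero_of_lt hkr]
              simp
          · rw [hk' k' hgt]
            simp
        · intro hnot
          exact absurd (Finset.mem_univ k) hnot
      rw [hQ0, coeff_zero] at hcQ
      have := hcQ.symm
      rcases mul_eq_zero.mp this with h1 | h1
      · exact h1
      · exact absurd h1 hh'
    have all0 : ∀ n : ℕ, ∀ k : Fin d, d - k.1 ≤ n → R k = 0 := by
      intro n
      induction n with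
      | zero => intro k hk; exact absurd hk (by have := k.isLt; omega)
      | succ n ih =>
        intro k _
        exact step k (fun k' hlt => ih k' (by have := k'.isLt; omega))
    funext k
    exact all0 d k (by omega)
  -- the linear map and the data vector
  let L : (Fin d → ℝ) →ₗ[ℝ] EuclideanSpace ℝ {x // x ∈ S} :=
    { toFun := fun R => WithLp.toLp 2 (fun j : {x // x ∈ S} => ∑ k : Fin d, R k * A j.1 k.1)
      map_add' := by
        intro R R'
        ext j
        simp [add_mul, Finset.sum_add_distrib]
      map_smul' := by
        intro m R
        ext j
        simp [Finset.mul_sum, mul_assoc] }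
  let v : EuclideanSpace ℝ {x // x ∈ S} := WithLp.toLp 2 (fun j : {x // x ∈ S} => φ j.1 - φi)
  have hLapp : ∀ (R : Fin d → ℝ) (j : {x // x ∈ S}),
      L R j = ∑ k : Fin d, R k * A j.1 k.1 := fun _ _ => rfl
  have hnorm : ∀ R, E R = ‖L R - v‖^2 := by
    intro R
    rw [hE R, EuclideanSpace.norm_eq, Real.sq_sqrt (by positivity),
      ← Finset.sum_coe_sort S
        (fun j => ((1/h) * (∫ x in (c j - h/2)..(c j + h/2), p R x) - φ j)^2)]
    apply Finset.sum_congr rfl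
    intro j _
    rw [havg R j.1]
    have : (L R - v) j = (φi + ∑ k : Fin d, R k * A j.1 k.1) - (φ j.1 - φi) + (φi - 2*φi) := by
      simp [hLapp, v]
      ring
    simp only [Real.norm_eq_abs, sq_abs, this]
    ring
  -- the range of L and the projection argument
  set K := LinearMap.range L with hK
  have hKcomp : IsComplete (K : Set (EuclideanSpace ℝ {x // x ∈ S})) :=
    Submodule.complete_of_finiteDimensional K
  obtain ⟨w, hwK, hwmin⟩ :=
    Submodule.exists_norm_eq_iInf_of_complete_subspace (𝕜 := ℝ) (K := K) hKcomp v
  obtain ⟨R₀, rfl⟩ := hwK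
  have hbdd : BddBelow (Set.range fun w : (K : Set (EuclideanSpace ℝ {x // x ∈ S})) => ‖v - ↑w‖) := by
    refine ⟨0, ?_⟩
    rintro x ⟨w', rfl⟩
    exact norm_nonneg _
  have hEnorm : ∀ R R' : Fin d → ℝ, (‖v - L R‖ ≤ ‖v - L R'‖) → E R ≤ E R' := by
    intro R R' hle
    rw [hnorm, hnorm, norm_sub_rev (L R), norm_sub_rev (L R')]
    exact pow_le_pow_left₀ (norm_nonneg _) hle 2
  have hmin0 : ∀ R' : Fin d → ℝ, E R₀ ≤ E R' := by
    intro R'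
    apply hEnorm
    rw [hwmin]
    exact ciInf_le hbdd ⟨L R', LinearMap.mem_range_self L R'⟩
  refine ⟨R₀, hmin0, ?_⟩
  intro R₁ hR₁
  have hle : ∀ R', ‖v - L R₁‖ ≤ ‖v - L R'‖ := by
    intro R'
    have hE1 := hR₁ R'
    rw [hnorm, hnorm, norm_sub_rev (L R₁), norm_sub_rev (L R')] at hE1
    exact le_of_pow_le_pow_left₀ two_ne_zero (norm_nonneg _) hE1
  have hmem₁ : L R₁ ∈ K := LinearMap.mem_range_self L R₁
  have hmin1 : ‖v - L R₁‖ = ⨅ w : (K : Set (EuclideanSpace ℝ {x // x ∈ S})), ‖v - ↑w‖ := by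
    apply le_antisymm
    · apply le_ciInf
      rintro ⟨w', hw'⟩
      obtain ⟨R', rfl⟩ := hw'
      exact hle R'
    · exact ciInf_le hbdd ⟨L R₁, hmem₁⟩
  have e1 := (Submodule.norm_eq_iInf_iff_real_inner_eq_zero K hmem₁).mp hmin1
  have e2 := (Submodule.norm_eq_iInf_iff_real_inner_eq_zero K (LinearMap.mem_range_self L R₀)).mp hwmin
  have hdmem : L R₁ - L R₀ ∈ K := K.sub_mem hmem₁ (LinearMap.mem_range_self L R₀)
  have hinner : (inner ℝ (L R₁ - L R₀) (L R₁ - L R₀) : ℝ) = 0 := by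
    have t1 := e1 _ hdmem
    have t2 := e2 _ hdmem
    have hsub : (v - L R₀) - (v - L R₁) = L R₁ - L R₀ := by abel
    have expand : (inner ℝ ((v - L R₀) - (v - L R₁)) (L R₁ - L R₀) : ℝ)
        = (inner ℝ (v - L R₀) (L R₁ - L R₀) : ℝ) - (inner ℝ (v - L R₁) (L R₁ - L R₀) : ℝ) :=
      inner_sub_left _ _ _
    rw [hsub] at expand
    rw [expand, t1, t2, sub_zero]
  have hLeq : L R₁ = L R₀ := sub_eq_zero.mp (inner_self_eq_zero.mp hinner)
  have hzero : L (R₁ - R₀) = 0 := by rw [map_sub, hLeq, sub_self]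
  have : R₁ - R₀ = 0 := by
    apply hLinj
    intro j hj
    have := congrFun (congrArg (fun f : EuclideanSpace ℝ {x // x ∈ S} => (WithLp.ofLp f : {x // x ∈ S} → ℝ)) hzero) ⟨j, hj⟩
    simpa [hLapp, sub_mul, Finset.sum_sub_distrib] using this
  exact sub_eq_zero.mp this
end

section
/- With the notation of the least-squares reconstruction (uniform mesh of size $h$, cell $K_i$ with center $x_i$, stencil $S_i$ of $n_i>d$ cells with pairwise disjoint interiors, ansatz $p_R(x)=\phi_i+\sum_{k=1}^d R_k((x-x_i)^k-X_{i,k})$, functional $E_i(R)=\sum_{j\in S_i}(\frac1h\int_{K_j}p_R-\phi_j)^2$): if there exists a polynomial $q$ of degree at most $d$ such that $\phi_i=\frac1h\int_{K_i}q(x)\,dx$ and $\phi_j=\frac1h\int_{K_j}q(x)\,dx$ for all $j\in S_i$, then the unique minimizer $\widehat R$ of $E_i$ satisfies $p_{\widehat R}=q$ and $E_i(\widehat R)=0$; in particular the least-squares reconstruction reproduces exactly all polynomials of degree at most $d$. -/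
open Polynomial intervalIntegral MeasureTheory

set_option maxHeartbeats 1000000

lemma integral_pow_sub (a b cc : ℝ) (m : ℕ) :
    ∫ x in a..b, (x - cc)^m = ((b-cc)^(m+1) - (a-cc)^(m+1))/(m+1) := by
  rw [intervalIntegral.integral_comp_sub_right (fun x => x^m) cc, integral_pow]

lemma avg_poly_sum (h ci t : ℝ) (hh : h ≠ 0) (n : ℕ) (b : ℕ → ℝ) :
    (1/h) * ∫ x in (t - h/2)..(t + h/2), (∑ k ∈ Finset.range n, b k * (x - ci)^k)
      = ∑ k ∈ Finset.range n,
          b k * (((t + h/2 - ci)^(k+1) - (t - h/2 - ci)^(k+1))/(((k:ℝ)+1)*h)) := by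
  have e2 : (∫ x in (t - h/2)..(t + h/2), ∑ k ∈ Finset.range n, b k * (x - ci)^k)
      = ∑ k ∈ Finset.range n, ∫ x in (t - h/2)..(t + h/2), b k * (x - ci)^k :=
    intervalIntegral.integral_finset_sum (fun k _ =>
      ((continuous_const.mul ((continuous_id.sub continuous_const).pow _)).intervalIntegrable _ _))
  rw [e2, Finset.mul_sum]
  refine Finset.sum_congr rfl fun k _ => ?_
  rw [intervalIntegral.integral_const_mul, integral_pow_sub]
  have hk : ((k:ℝ)+1) ≠ 0 := by positivity
  have key : ∀ D : ℝ, (1/h) * (b k * (D/((k:ℝ)+1))) = b k * (D/(((k:ℝ)+1)*h)) := by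
    intro D; rw [← div_div]; ring
  exact key _

lemma avg_ansatz (h ci t φi : ℝ) (hh : h ≠ 0) (d : ℕ) (X : ℕ → ℝ) (R : Fin d → ℝ) :
    (1/h) * ∫ x in (t - h/2)..(t + h/2),
        (φi + ∑ k : Fin d, R k * ((x - ci)^(k.1+1) - X (k.1+1)))
      = φi + ∑ k : Fin d, R k *
          (((t + h/2 - ci)^(k.1+2) - (t - h/2 - ci)^(k.1+2))/(((k.1:ℝ)+2)*h) - X (k.1+1)) := by
  have hint : ∀ (k : Fin d), IntervalIntegrable
      (fun x => R k * ((x - ci)^(k.1+1) - X (k.1+1))) volume (t-h/2) (t+h/2) :=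
    fun k => ((continuous_const.mul
      (((continuous_id.sub continuous_const).pow _).sub continuous_const)).intervalIntegrable _ _)
  have e1 : (∫ x in (t - h/2)..(t + h/2),
        (φi + ∑ k : Fin d, R k * ((x - ci)^(k.1+1) - X (k.1+1))))
      = (∫ _x in (t - h/2)..(t + h/2), φi)
        + ∫ x in (t - h/2)..(t + h/2), ∑ k : Fin d, R k * ((x - ci)^(k.1+1) - X (k.1+1)) :=
    intervalIntegral.integral_add intervalIntegrable_const
      ((continuous_finset_sum _ fun k _ => continuous_const.mul
        (((continuous_id.sub continuous_const).pow _).sub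
          continuous_const)).intervalIntegrable _ _)
  have e2 : (∫ x in (t - h/2)..(t + h/2), ∑ k : Fin d, R k * ((x - ci)^(k.1+1) - X (k.1+1)))
      = ∑ k : Fin d, ∫ x in (t - h/2)..(t + h/2), R k * ((x - ci)^(k.1+1) - X (k.1+1)) :=
    intervalIntegral.integral_finset_sum (fun k _ => hint k)
  have hterm : ∀ k : Fin d, (∫ x in (t - h/2)..(t + h/2), R k * ((x - ci)^(k.1+1) - X (k.1+1)))
      = R k * ((((t + h/2 - ci)^(k.1+2) - (t - h/2 - ci)^(k.1+2))/((k.1:ℝ)+2)) - X (k.1+1)*h) := by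
    intro k
    have e3 : (∫ x in (t - h/2)..(t + h/2), ((x - ci)^(k.1+1) - X (k.1+1)))
        = (∫ x in (t - h/2)..(t + h/2), (x - ci)^(k.1+1))
          - ∫ _x in (t - h/2)..(t + h/2), (X (k.1+1) : ℝ) :=
      intervalIntegral.integral_sub
        (((continuous_id.sub continuous_const).pow _).intervalIntegrable _ _)
        intervalIntegrable_const
    rw [intervalIntegral.integral_const_mul, e3, integral_pow_sub,
        intervalIntegral.integral_const]
    have ht : (t + h/2 - (t - h/2)) = h := by ring
    rw [ht, smul_eq_mul]
    push_cast
    ring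
  rw [e1, e2]
  simp only [hterm]
  rw [intervalIntegral.integral_const]
  have ht : (t + h/2 - (t - h/2)) = h := by ring
  rw [ht, smul_eq_mul, mul_add, Finset.mul_sum]
  congr 1
  · field_simp
  · refine Finset.sum_congr rfl fun k _ => ?_
    have hk2 : ((k.1:ℝ)+2) ≠ 0 := by positivity
    have key : ∀ D Xv : ℝ, (1/h) * (R k * (D/((k.1:ℝ)+2) - Xv*h))
        = R k * (D/(((k.1:ℝ)+2)*h) - Xv) := by
      intro D Xv; rw [← div_div]; field_simp
    exact key _ _

lemma term_transform (h uj : ℝ) (hh : h ≠ 0) (k : ℕ) (r : ℝ) :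
    (r * h^(k+1) / ((k:ℝ)+2)) * ((uj+1/2)^(k+2) - (uj-1/2)^(k+2)
        - ((1/2:ℝ)^(k+2) - (-(1/2):ℝ)^(k+2)))
    = r * ((((uj+1/2)*h)^(k+2) - ((uj-1/2)*h)^(k+2))/(((k:ℝ)+2)*h)
           - ((h/2)^(k+2) - (-(h/2))^(k+2))/(((k:ℝ)+2)*h)) := by
  have hk : ((k:ℝ)+2) ≠ 0 := by positivity
  have e1 : (h/2) = (1/2:ℝ)*h := by ring
  have e2 : (-(h/2)) = (-(1/2):ℝ)*h := by ring
  rw [e2, e1, mul_pow, mul_pow, mul_pow, mul_pow]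
  field_simp
  ring

lemma coeffB (k : ℕ) (t : ℝ) :
    ((Polynomial.X + Polynomial.C (1/2:ℝ))^(k+2)
      - (Polynomial.X - Polynomial.C (1/2:ℝ))^(k+2) - Polynomial.C t).coeff (k+1)
    = (k:ℝ)+2 := by
  have e : Polynomial.X - Polynomial.C (1/2:ℝ) = Polynomial.X + Polynomial.C (-(1/2):ℝ) := by
    rw [Polynomial.C_neg]; ring
  rw [Polynomial.coeff_sub, Polynomial.coeff_sub, Polynomial.coeff_X_add_C_pow, e,
      Polynomial.coeff_X_add_C_pow, Polynomial.coeff_C]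
  have h1 : k+2-(k+1) = 1 := by omega
  have h2 : (k+2).choose (k+1) = k+2 := Nat.choose_succ_self_right (k+1)
  rw [h1, h2]
  have h3 : (k+1 : ℕ) ≠ 0 := by omega
  rw [if_neg h3]
  push_cast
  ring

lemma Bdeg (k : ℕ) (t : ℝ) :
    ((Polynomial.X + Polynomial.C (1/2:ℝ))^(k+2)
      - (Polynomial.X - Polynomial.C (1/2:ℝ))^(k+2) - Polynomial.C t).natDegree ≤ k+1 := by
  set B := (Polynomial.X + Polynomial.C (1/2:ℝ))^(k+2)
      - (Polynomial.X - Polynomial.C (1/2:ℝ))^(k+2) - Polynomial.C t with hB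
  have h1 : ((Polynomial.X + Polynomial.C (1/2:ℝ))^(k+2)
      - (Polynomial.X - Polynomial.C (1/2:ℝ))^(k+2)).degree < ((k+2 : ℕ) : WithBot ℕ) := by
    have hd : ((Polynomial.X + Polynomial.C (1/2:ℝ))^(k+2)).degree = ((k+2:ℕ) : WithBot ℕ) := by
      rw [Polynomial.degree_pow, Polynomial.degree_X_add_C]
      simp
    have hd' : ((Polynomial.X - Polynomial.C (1/2:ℝ))^(k+2)).degree = ((k+2:ℕ) : WithBot ℕ) := by
      rw [Polynomial.degree_pow, Polynomial.degree_X_sub_C]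
      simp
    have := Polynomial.degree_sub_lt (hd.trans hd'.symm)
      (Polynomial.Monic.ne_zero ((Polynomial.monic_X_add_C _).pow _))
      (((Polynomial.monic_X_add_C (1/2:ℝ)).pow (k+2)).leadingCoeff.trans
        (((Polynomial.monic_X_sub_C (1/2:ℝ)).pow (k+2)).leadingCoeff).symm)
    rwa [hd] at this
  have h2 : B.degree < ((k+2:ℕ) : WithBot ℕ) := by
    rw [hB]
    refine lt_of_le_of_lt (Polynomial.degree_sub_le _ _) (max_lt h1 ?_)
    exact lt_of_le_of_lt Polynomial.degree_C_le (by exact_mod_cast Nat.succ_pos (k+1))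
  by_cases hB0 : B = 0
  · rw [hB0]; simp
  · have := (Polynomial.natDegree_lt_iff_degree_lt hB0).mpr h2
    omega



/-- Exactness of the least-squares reconstruction on polynomials of degree at
most `d`: if the data `φi`, `(φ j)_{j ∈ S}` are the cell averages of a
polynomial `q` of degree at most `d`, then any minimizer `R̂` of the quadratic
functional `E` satisfies `p_{R̂} = q` and `E R̂ = 0`. -/
theorem least_squares_reproduces_polynomials
    (d : ℕ) (h : ℝ) (hh : 0 < h) (c : ℤ → ℝ) (hc : ∀ j : ℤ, c j = c 0 + j * h)
    (i : ℤ) (S : Finset ℤ) (hiS : i ∉ S) (hcard : d < S.card)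
    (φi : ℝ) (φ : ℤ → ℝ) (X : ℕ → ℝ)
    (hX : ∀ k, X k = (1/h) * ∫ x in (c i - h/2)..(c i + h/2), (x - c i)^k)
    (p : (Fin d → ℝ) → ℝ → ℝ)
    (hp : ∀ R x, p R x = φi + ∑ k : Fin d, R k * ((x - c i)^(k.1+1) - X (k.1+1)))
    (E : (Fin d → ℝ) → ℝ)
    (hE : ∀ R, E R = ∑ j ∈ S, ((1/h) * (∫ x in (c j - h/2)..(c j + h/2), p R x) - φ j)^2)
    (q : Polynomial ℝ) (hq : q.degree ≤ d)
    (hφi : φi = (1/h) * ∫ x in (c i - h/2)..(c i + h/2), q.eval x)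
    (hφ : ∀ j ∈ S, φ j = (1/h) * ∫ x in (c j - h/2)..(c j + h/2), q.eval x) :
    ∀ Rhat : Fin d → ℝ, (∀ R' : Fin d → ℝ, E Rhat ≤ E R') →
      (∀ x : ℝ, p Rhat x = q.eval x) ∧ E Rhat = 0 := by
  intro Rhat hmin
  have hh' : h ≠ 0 := ne_of_gt hh
  -- coefficients of q around c i
  set b : ℕ → ℝ := fun k => (q.comp (Polynomial.X + Polynomial.C (c i))).coeff k with hb
  have hqd : q.natDegree ≤ d := Polynomial.natDegree_le_iff_degree_le.mpr hq
  have hcompdeg : (q.comp (Polynomial.X + Polynomial.C (c i))).natDegree ≤ d := by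
    refine le_trans (Polynomial.natDegree_comp_le) ?_
    simpa [Polynomial.natDegree_X_add_C] using hqd
  have qe : ∀ x : ℝ, q.eval x = ∑ k ∈ Finset.range (d+1), b k * (x - c i)^k := by
    intro x
    have h1 : q.eval x = (q.comp (Polynomial.X + Polynomial.C (c i))).eval (x - c i) := by
      rw [Polynomial.eval_comp]; simp
    rw [h1, Polynomial.eval_eq_sum_range' (Nat.lt_succ_of_le hcompdeg)]
  have avgq : ∀ t : ℝ, (1/h) * (∫ x in (t - h/2)..(t + h/2), q.eval x)
      = ∑ k ∈ Finset.range (d+1),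
          b k * (((t + h/2 - c i)^(k+1) - (t - h/2 - c i)^(k+1))/(((k:ℝ)+1)*h)) := by
    intro t
    rw [show (∫ x in (t - h/2)..(t + h/2), q.eval x)
        = ∫ x in (t - h/2)..(t + h/2), (∑ k ∈ Finset.range (d+1), b k * (x - c i)^k) by
      simp only [qe]]
    exact avg_poly_sum h (c i) t hh' (d+1) b
  have hX' : ∀ m : ℕ, X m = ((h/2)^(m+1) - (-(h/2))^(m+1))/(((m:ℝ)+1)*h) := by
    intro m
    rw [hX m, integral_pow_sub]
    have e1 : c i + h/2 - c i = h/2 := by ring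
    have e2 : c i - h/2 - c i = -(h/2) := by ring
    rw [e1, e2, ← div_div]
    ring
  have avgp : ∀ (R : Fin d → ℝ) (t : ℝ),
      (1/h) * (∫ x in (t - h/2)..(t + h/2), p R x)
      = φi + ∑ k : Fin d, R k *
          (((t + h/2 - c i)^(k.1+2) - (t - h/2 - c i)^(k.1+2))/(((k.1:ℝ)+2)*h) - X (k.1+1)) := by
    intro R t
    rw [show (∫ x in (t - h/2)..(t + h/2), p R x)
        = ∫ x in (t - h/2)..(t + h/2),
            (φi + ∑ k : Fin d, R k * ((x - c i)^(k.1+1) - X (k.1+1))) by simp only [hp]]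
    exact avg_ansatz h (c i) t φi hh' d X R
  -- the exact-coefficient vector
  set Rstar : Fin d → ℝ := fun k => b (k.1+1) with hRstar
  have hφiX : φi = ∑ k ∈ Finset.range (d+1), b k * X k := by
    rw [hφi, avgq (c i)]
    refine Finset.sum_congr rfl fun k _ => ?_
    rw [hX' k]
    have e1 : c i + h/2 - c i = h/2 := by ring
    have e2 : c i - h/2 - c i = -(h/2) := by ring
    rw [e1, e2]
  have hX0 : X 0 = 1 := by
    rw [hX' 0]
    field_simp
    push_cast; ring
  have pstar : ∀ x : ℝ, p Rstar x = q.eval x := by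
    intro x
    rw [hp, qe]
    have conv1 : ∑ k : Fin d, Rstar k * ((x - c i)^(k.1+1) - X (k.1+1))
        = ∑ k ∈ Finset.range d, b (k+1) * ((x - c i)^(k+1) - X (k+1)) := by
      rw [hRstar]
      exact Fin.sum_univ_eq_sum_range (fun m => b (m+1) * ((x - c i)^(m+1) - X (m+1))) d
    rw [conv1, hφiX, Finset.sum_range_succ' (fun k => b k * X k) d,
        Finset.sum_range_succ' (fun k => b k * (x - c i)^k) d, hX0]
    simp only [pow_zero, mul_sub]
    rw [Finset.sum_sub_distrib]
    ring
  -- E Rstar = 0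
  have ERstar : E Rstar = 0 := by
    rw [hE]
    refine Finset.sum_eq_zero fun j hj => ?_
    rw [show (∫ x in (c j - h/2)..(c j + h/2), p Rstar x)
        = ∫ x in (c j - h/2)..(c j + h/2), q.eval x by simp only [pstar]]
    rw [← hφ j hj]
    simp
  have Enn : 0 ≤ E Rhat := by
    rw [hE]; exact Finset.sum_nonneg fun j _ => sq_nonneg _
  have E0 : E Rhat = 0 := le_antisymm (ERstar ▸ hmin Rstar) Enn
  have havg : ∀ j ∈ S, (1/h) * (∫ x in (c j - h/2)..(c j + h/2), p Rhat x) = φ j := by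
    intro j hj
    have h2 : ∑ j ∈ S, ((1/h) * (∫ x in (c j - h/2)..(c j + h/2), p Rhat x) - φ j)^2 = 0 := by
      rw [← hE]; exact E0
    have h3 := (Finset.sum_eq_zero_iff_of_nonneg (fun j _ => sq_nonneg _)).mp h2 j hj
    have h4 : (1/h) * (∫ x in (c j - h/2)..(c j + h/2), p Rhat x) - φ j = 0 :=
      pow_eq_zero_iff (two_ne_zero) |>.mp h3
    linarith
  -- the orthogonality relations
  have key1 : ∀ j ∈ S, ∑ k : Fin d, (Rhat k - Rstar k) *
      (((c j + h/2 - c i)^(k.1+2) - (c j - h/2 - c i)^(k.1+2))/(((k.1:ℝ)+2)*h) - X (k.1+1))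
      = 0 := by
    intro j hj
    have e1 := avgp Rhat (c j)
    have e2 := avgp Rstar (c j)
    have f1 : (1/h) * (∫ x in (c j - h/2)..(c j + h/2), p Rhat x) = φ j := havg j hj
    have f2 : (1/h) * (∫ x in (c j - h/2)..(c j + h/2), p Rstar x) = φ j := by
      rw [show (∫ x in (c j - h/2)..(c j + h/2), p Rstar x)
          = ∫ x in (c j - h/2)..(c j + h/2), q.eval x by simp only [pstar]]
      rw [← hφ j hj]
    have g1 := (f1.symm.trans e1)
    have g2 := (f2.symm.trans e2)
    have g3 := g1.symm.trans g2
    simp only [sub_mul]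
    rw [Finset.sum_sub_distrib]
    have g4 : ∑ k : Fin d, Rhat k *
        (((c j + h/2 - c i)^(k.1+2) - (c j - h/2 - c i)^(k.1+2))/(((k.1:ℝ)+2)*h) - X (k.1+1))
        = ∑ k : Fin d, Rstar k *
        (((c j + h/2 - c i)^(k.1+2) - (c j - h/2 - c i)^(k.1+2))/(((k.1:ℝ)+2)*h) - X (k.1+1)) := by
      have := add_left_cancel g3
      exact this
    rw [g4, sub_self]
  -- geometry of cell centers
  set u : ℤ → ℝ := fun j => (j : ℝ) - (i : ℝ) with hu
  have hcc : ∀ j : ℤ, c j - c i = u j * h := by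
    intro j
    rw [hc j, hc i, hu]
    push_cast
    ring
  have uinj : Function.Injective u := by
    intro x y hxy
    rw [hu] at hxy
    simp only [sub_left_inj, Int.cast_inj] at hxy
    exact hxy
  -- shifted coefficient vector
  set a : ℕ → ℝ := fun k => if hk : k < d then Rhat ⟨k, hk⟩ - Rstar ⟨k, hk⟩ else 0 with ha
  have key2 : ∀ j ∈ S, ∑ k ∈ Finset.range d, (a k * h^(k+1) / ((k:ℝ)+2)) *
      ((u j + 1/2)^(k+2) - (u j - 1/2)^(k+2) - ((1/2:ℝ)^(k+2) - (-(1/2):ℝ)^(k+2))) = 0 := by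
    intro j hj
    rw [← key1 j hj]
    rw [← Fin.sum_univ_eq_sum_range (fun m => (a m * h^(m+1) / ((m:ℝ)+2)) *
      ((u j + 1/2)^(m+2) - (u j - 1/2)^(m+2) - ((1/2:ℝ)^(m+2) - (-(1/2):ℝ)^(m+2)))) d]
    refine Finset.sum_congr rfl fun k _ => ?_
    have hak : a k.1 = Rhat k - Rstar k := by
      rw [ha]; simp [k.2]
    rw [hak, term_transform h (u j) hh' k.1 (Rhat k - Rstar k)]
    have e1 : c j + h/2 - c i = (u j + 1/2) * h := by
      linear_combination (hcc j)
    have e2 : c j - h/2 - c i = (u j - 1/2) * h := by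
      linear_combination (hcc j)
    rw [e1, e2, hX' (k.1+1)]
    have ec : ((k.1+1 : ℕ) : ℝ) + 1 = (k.1 : ℝ) + 2 := by push_cast; ring
    rw [ec]
  -- the vanishing polynomial
  set P : Polynomial ℝ := ∑ k ∈ Finset.range d,
      Polynomial.C (a k * h^(k+1) / ((k:ℝ)+2)) *
        ((Polynomial.X + Polynomial.C (1/2:ℝ))^(k+2)
          - (Polynomial.X - Polynomial.C (1/2:ℝ))^(k+2)
          - Polynomial.C ((1/2:ℝ)^(k+2) - (-(1/2):ℝ)^(k+2))) with hP
  have evalP : ∀ t : ℝ, P.eval t = ∑ k ∈ Finset.range d, (a k * h^(k+1) / ((k:ℝ)+2)) *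
      ((t + 1/2)^(k+2) - (t - 1/2)^(k+2) - ((1/2:ℝ)^(k+2) - (-(1/2):ℝ)^(k+2))) := by
    intro t
    rw [hP, Polynomial.eval_finset_sum]
    refine Finset.sum_congr rfl fun k _ => ?_
    simp
  have hPdeg : P.natDegree ≤ d := by
    rw [hP]
    refine Polynomial.natDegree_sum_le_of_forall_le _ _ fun k hk => ?_
    refine le_trans (Polynomial.natDegree_C_mul_le _ _) (le_trans (Bdeg k _) ?_)
    have := Finset.mem_range.mp hk
    omega
  have hP0 : P = 0 := by
    refine Polynomial.eq_zero_of_natDegree_lt_card_of_eval_eq_zero' P (S.image u)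
      (fun t ht => ?_) ?_
    · obtain ⟨j, hj, rfl⟩ := Finset.mem_image.mp ht
      rw [evalP]
      exact key2 j hj
    · rw [Finset.card_image_of_injective _ uinj]
      exact lt_of_le_of_lt hPdeg hcard
  -- coefficient extraction: downward induction
  have acoeff : ∀ k, k < d → (∀ l, k < l → a l = 0) → a k = 0 := by
    intro k hk hl
    have h0 : P.coeff (k+1) = 0 := by rw [hP0]; simp
    rw [hP, Polynomial.finset_sum_coeff] at h0
    rw [Finset.sum_eq_single k (fun l hlmem hlk => ?_) (fun hkk => ?_)] at h0
    · rw [Polynomial.coeff_C_mul, coeffB k] at h0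
      have hk2 : ((k:ℝ)+2) ≠ 0 := by positivity
      have hhk : h^(k+1) ≠ 0 := pow_ne_zero _ hh'
      rw [div_mul_cancel₀ _ hk2] at h0
      rcases mul_eq_zero.mp h0 with h1 | h1
      · exact h1
      · exact absurd h1 hhk
    · rcases lt_or_gt_of_ne hlk with h1 | h2
      · refine Polynomial.coeff_eq_zero_of_natDegree_lt ?_
        refine lt_of_le_of_lt (le_trans (Polynomial.natDegree_C_mul_le _ _) (Bdeg l _)) ?_
        omega
      · rw [hl l h2]
        simp
    · exact absurd (Finset.mem_range.mpr hk) hkk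
  have hzero : ∀ n k, d - k ≤ n → a k = 0 := by
    intro n
    induction n with
    | zero =>
      intro k hk
      have hkd : ¬ k < d := by omega
      rw [ha]; exact dif_neg hkd
    | succ n ih =>
      intro k hk
      by_cases hkd : k < d
      · refine acoeff k hkd fun l hlk => ?_
        by_cases hld : l < d
        · exact ih l (by omega)
        · rw [ha]; exact dif_neg hld
      · rw [ha]; exact dif_neg hkd
  have hall : ∀ k : Fin d, Rhat k = Rstar k := by
    intro k
    have hak : a k.1 = Rhat k - Rstar k := by
      rw [ha]; simp [k.2]
    have h1 := hzero d k.1 (by omega)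
    rw [hak] at h1
    linarith
  refine ⟨fun x => ?_, E0⟩
  rw [← pstar x, hp, hp]
  exact congrArg (φi + ·) (Finset.sum_congr rfl fun k _ => by rw [hall k])
end
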